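/- Every non-empty graph G with at least 2^{s+1} · t · |V(G)| edges has a K_{s,t}-minor, for positive integers s, t. -/

import Mathlib

/-- `H` is a minor of `G`: there are disjoint nonempty connected branch sets in `G`,
one for each vertex of `H`, with an edge of `G` between the branch sets of any two
adjacent vertices of `H`. -/
def HasMinor {V W : Type*} (G : SimpleGraph V) (H : SimpleGraph W) : Prop :=
  ∃ φ : W → Set V,
    (∀ w, (φ w).Nonempty) ∧
    (∀ w, (G.induce (φ w)).Connected) ∧
    (∀ w w', w ≠ w' → Disjoint (φ w) (φ w')) ∧
    (∀ w w', H.Adj w w' → ∃ u ∈ φ w, ∃ v ∈ φ w', G.Adj u v)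

open SimpleGraph

section Helpers

universe u
variable {V : Type u}

lemma singleton_conn (G : SimpleGraph V) (v : V) : (G.induce {v}).Connected := by
  constructor
  · intro a b
    have : a = b := by
      apply Subtype.ext
      have ha := a.2; have hb := b.2
      simp only [Set.mem_singleton_iff] at ha hb
      rw [ha, hb]
    subst this; rfl

lemma conn_transfer {A B : Type*} (G : SimpleGraph A) (G' : SimpleGraph B)
    (f : A → B) (hsurj : Function.Surjective f)
    (hadj : ∀ a b, G.Adj a b → G'.Adj (f a) (f b)) (h : G.Connected) : G'.Connected :=
  SimpleGraph.Connected.map ⟨f, fun hab => hadj _ _ hab⟩ hsurj h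

lemma minor_induce {W : Type*} (G : SimpleGraph V) (A : Set V) (H : SimpleGraph W)
    (h : HasMinor (G.induce A) H) :
    ∃ φ : W → Set V,
      (∀ w, φ w ⊆ A) ∧ (∀ w, (φ w).Nonempty) ∧ (∀ w, (G.induce (φ w)).Connected) ∧
      (∀ w w', w ≠ w' → Disjoint (φ w) (φ w')) ∧
      (∀ w w', H.Adj w w' → ∃ u ∈ φ w, ∃ v ∈ φ w', G.Adj u v) := by
  obtain ⟨φ, h1, h2, h3, h4⟩ := h
  refine ⟨fun w => Subtype.val '' φ w, ?_, ?_, ?_, ?_, ?_⟩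
  · intro w v hv; obtain ⟨a, _, rfl⟩ := hv; exact a.2
  · intro w; exact (h1 w).image _
  · intro w
    refine conn_transfer _ _ (fun a => ⟨a.1.1, ⟨a.1, a.2, rfl⟩⟩) ?_ ?_ (h2 w)
    · rintro ⟨v, a, ha, rfl⟩; exact ⟨⟨a, ha⟩, rfl⟩
    · intro a b hab
      exact hab
  · intro w w' hww'
    exact Set.disjoint_image_of_injective Subtype.val_injective (h3 w w' hww')
  · intro w w' hadj
    obtain ⟨u, hu, v, hv, huv⟩ := h4 w w' hadj
    exact ⟨u.1, ⟨u, hu, rfl⟩, v.1, ⟨v, hv, rfl⟩, huv⟩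

def contractG (G : SimpleGraph V) (x y : V) : SimpleGraph {v : V // v ≠ y} where
  Adj a b := a ≠ b ∧ (G.Adj a b ∨ (a.1 = x ∧ G.Adj y b) ∨ (b.1 = x ∧ G.Adj y a))
  symm := ⟨fun a b => by rintro ⟨h1, h2⟩; exact ⟨h1.symm, by tauto⟩⟩
  loopless := ⟨fun a => by simp⟩

lemma contract_reach (G : SimpleGraph V) {x y : V} (hxy : G.Adj x y)
    (S : Set {v : V // v ≠ y}) (T : Set V)
    (hT : T = Subtype.val '' S ∪ {z | z = y ∧ (⟨x, hxy.ne⟩ : {v : V // v ≠ y}) ∈ S})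
    {a b : ↥S} (hr : ((contractG G x y).induce S).Reachable a b) :
    (G.induce T).Reachable ⟨a.1.1, by subst hT; exact Or.inl ⟨a.1, a.2, rfl⟩⟩
      ⟨b.1.1, by subst hT; exact Or.inl ⟨b.1, b.2, rfl⟩⟩ := by
  subst hT
  obtain ⟨p⟩ := hr
  induction p with
  | nil => exact SimpleGraph.Reachable.refl _
  | @cons a c b h p ih =>
    refine SimpleGraph.Reachable.trans ?_ ih
    obtain ⟨hne, hcase⟩ := h
    have hmem : ∀ (e : ↥S), e.1.1 ∈ Subtype.val '' S ∪ {z | z = y ∧ (⟨x, hxy.ne⟩ : {v : V // v ≠ y}) ∈ S} :=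
      fun e => Or.inl ⟨e.1, e.2, rfl⟩
    rcases hcase with hadj | ⟨hax, hyc⟩ | ⟨hcx, hya⟩
    · exact SimpleGraph.Adj.reachable hadj
    · -- a.1.1 = x, G.Adj y c
      have hxS : (⟨x, hxy.ne⟩ : {v : V // v ≠ y}) ∈ S := by
        have : a.1 = ⟨x, hxy.ne⟩ := Subtype.ext hax
        rw [← this]; exact a.2
      have hyT : y ∈ Subtype.val '' S ∪ {z | z = y ∧ (⟨x, hxy.ne⟩ : {v : V // v ≠ y}) ∈ S} :=
        Or.inr ⟨rfl, hxS⟩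
      have e1 : (G.induce (Subtype.val '' S ∪ {z | z = y ∧ (⟨x, hxy.ne⟩ : {v : V // v ≠ y}) ∈ S})).Adj ⟨a.1.1, hmem a⟩ ⟨y, hyT⟩ := by
        show G.Adj a.1.1 y
        have hax' : a.1.1 = x := hax
        rw [hax']; exact hxy
      have e2 : (G.induce (Subtype.val '' S ∪ {z | z = y ∧ (⟨x, hxy.ne⟩ : {v : V // v ≠ y}) ∈ S})).Adj ⟨y, hyT⟩ ⟨c.1.1, hmem c⟩ := by
        show G.Adj y c.1.1; exact hyc
      exact e1.reachable.trans e2.reachable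
    · have hxS : (⟨x, hxy.ne⟩ : {v : V // v ≠ y}) ∈ S := by
        have : c.1 = ⟨x, hxy.ne⟩ := Subtype.ext hcx
        rw [← this]; exact c.2
      have hyT : y ∈ Subtype.val '' S ∪ {z | z = y ∧ (⟨x, hxy.ne⟩ : {v : V // v ≠ y}) ∈ S} :=
        Or.inr ⟨rfl, hxS⟩
      have e1 : (G.induce (Subtype.val '' S ∪ {z | z = y ∧ (⟨x, hxy.ne⟩ : {v : V // v ≠ y}) ∈ S})).Adj ⟨a.1.1, hmem a⟩ ⟨y, hyT⟩ := by
        show G.Adj a.1.1 y; exact hya.symm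
      have e2 : (G.induce (Subtype.val '' S ∪ {z | z = y ∧ (⟨x, hxy.ne⟩ : {v : V // v ≠ y}) ∈ S})).Adj ⟨y, hyT⟩ ⟨c.1.1, hmem c⟩ := by
        show G.Adj y c.1.1
        have hcx' : c.1.1 = x := hcx
        rw [hcx']; exact hxy.symm
      exact e1.reachable.trans e2.reachable

lemma contract_minor {W : Type*} (G : SimpleGraph V) {x y : V} (hxy : G.Adj x y)
    (H : SimpleGraph W) (h : HasMinor (contractG G x y) H) : HasMinor G H := by
  obtain ⟨φ, h1, h2, h3, h4⟩ := h
  set x' : {v : V // v ≠ y} := ⟨x, hxy.ne⟩ with hx'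
  refine ⟨fun w => Subtype.val '' φ w ∪ {z | z = y ∧ x' ∈ φ w}, ?_, ?_, ?_, ?_⟩
  · intro w
    obtain ⟨a, ha⟩ := h1 w
    exact ⟨a.1, Or.inl ⟨a, ha, rfl⟩⟩
  · intro w
    have hne : Nonempty ↥(Subtype.val '' φ w ∪ {z | z = y ∧ x' ∈ φ w}) := by
      obtain ⟨a, ha⟩ := h1 w
      exact ⟨⟨a.1, Or.inl ⟨a, ha, rfl⟩⟩⟩
    haveI := hne
    refine SimpleGraph.Connected.mk ?_
    rintro ⟨u, hu⟩ ⟨v, hv⟩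
    -- reduce both to image points
    have main : ∀ (a b : ↥(φ w)),
        (G.induce (Subtype.val '' φ w ∪ {z | z = y ∧ x' ∈ φ w})).Reachable
          ⟨a.1.1, Or.inl ⟨a.1, a.2, rfl⟩⟩ ⟨b.1.1, Or.inl ⟨b.1, b.2, rfl⟩⟩ := by
      intro a b
      exact contract_reach G hxy (φ w) _ rfl ((h2 w).preconnected a b)
    have step : ∀ (u : V) (hu : u ∈ Subtype.val '' φ w ∪ {z | z = y ∧ x' ∈ φ w}),
        ∃ (a : ↥(φ w)), (G.induce (Subtype.val '' φ w ∪ {z | z = y ∧ x' ∈ φ w})).Reachable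
          ⟨u, hu⟩ ⟨a.1.1, Or.inl ⟨a.1, a.2, rfl⟩⟩ := by
      intro u hu
      rcases hu with ⟨a, ha, rfl⟩ | ⟨huy, hxw⟩
      · exact ⟨⟨a, ha⟩, SimpleGraph.Reachable.refl _⟩
      · refine ⟨⟨x', hxw⟩, SimpleGraph.Adj.reachable ?_⟩
        show G.Adj u x
        rw [huy]; exact hxy.symm
    obtain ⟨a, hra⟩ := step u hu
    obtain ⟨b, hrb⟩ := step v hv
    exact hra.trans ((main a b).trans hrb.symm)
  · intro w w' hww'
    rw [Set.disjoint_left]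
    rintro z (⟨a, ha, rfl⟩ | ⟨rfl, hxw⟩) hz'
    · rcases hz' with ⟨b, hb, hab⟩ | ⟨hay, _⟩
      · have : a = b := Subtype.val_injective hab.symm
        subst this
        exact (Set.disjoint_left.mp (h3 w w' hww') ha) hb
      · exact a.2 hay
    · rcases hz' with ⟨b, hb, hby⟩ | ⟨_, hxw'⟩
      · exact b.2 hby
      · exact (Set.disjoint_left.mp (h3 w w' hww') hxw) hxw'
  · intro w w' hadj
    obtain ⟨a, ha, b, hb, hab⟩ := h4 w w' hadj
    obtain ⟨-, hcase⟩ := hab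
    rcases hcase with hadj' | ⟨hax, hyb⟩ | ⟨hbx, hya⟩
    · exact ⟨a.1, Or.inl ⟨a, ha, rfl⟩, b.1, Or.inl ⟨b, hb, rfl⟩, hadj'⟩
    · have hxw : x' ∈ φ w := by
        have : a = x' := Subtype.ext hax
        rw [← this]; exact ha
      exact ⟨y, Or.inr ⟨rfl, hxw⟩, b.1, Or.inl ⟨b, hb, rfl⟩, hyb⟩
    · have hxw' : x' ∈ φ w' := by
        have : b = x' := Subtype.ext hbx
        rw [← this]; exact hb
      exact ⟨a.1, Or.inl ⟨a, ha, rfl⟩, y, Or.inr ⟨rfl, hxw'⟩, hya.symm⟩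

lemma contract_edges (G : SimpleGraph V) [Fintype V] {x y : V} (hxy : G.Adj x y) :
    G.edgeSet.ncard ≤
      (contractG G x y).edgeSet.ncard + (G.neighborSet x ∩ G.neighborSet y).ncard + 1 := by
  classical
  set x' : {v : V // v ≠ y} := ⟨x, hxy.ne⟩ with hx'def
  set g : V → {v : V // v ≠ y} := fun v => if h : v = y then x' else ⟨v, h⟩ with hgdef
  have hg_ne : ∀ (v : V) (h : v ≠ y), g v = ⟨v, h⟩ := fun v h => dif_neg h
  set Eold : Set (Sym2 V) := {e ∈ G.edgeSet | y ∉ e} with hEold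
  set R : Set V := G.neighborSet y \ (G.neighborSet x ∪ {x}) with hR
  -- Step 1: split edge set
  have hsplit : G.edgeSet.ncard = Eold.ncard + (G.neighborSet y).ncard := by
    have h1 : G.edgeSet = Eold ∪ G.incidenceSet y := by
      ext e
      simp only [hEold, incidenceSet, Set.mem_union, Set.mem_setOf_eq, Set.mem_sep_iff]
      tauto
    have h2 : Disjoint Eold (G.incidenceSet y) := by
      rw [Set.disjoint_left]
      rintro e ⟨_, hye⟩ ⟨_, hye'⟩
      exact hye hye'
    have h3 : (G.incidenceSet y).ncard = (G.neighborSet y).ncard := by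
      rw [← Nat.card_coe_set_eq, ← Nat.card_coe_set_eq]
      exact Nat.card_congr (G.incidenceSetEquivNeighborSet y)
    rw [h1, Set.ncard_union_eq h2, h3]
  -- Step 2: split neighbor set of y
  have hnbr : (G.neighborSet y).ncard =
      (G.neighborSet x ∩ G.neighborSet y).ncard + 1 + R.ncard := by
    have h1 : G.neighborSet y = (G.neighborSet x ∩ G.neighborSet y) ∪ {x} ∪ R := by
      ext v
      simp only [hR, Set.mem_union, Set.mem_inter_iff, Set.mem_diff, Set.mem_singleton_iff,
        mem_neighborSet]
      constructor
      · intro hv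
        by_cases hvx : v = x
        · exact Or.inl (Or.inr hvx)
        · by_cases hvn : G.Adj x v
          · exact Or.inl (Or.inl ⟨hvn, hv⟩)
          · exact Or.inr ⟨hv, by tauto⟩
      · rintro ((⟨_, hv⟩ | rfl) | ⟨hv, _⟩)
        · exact hv
        · exact hxy.symm
        · exact hv
    have d1 : Disjoint (G.neighborSet x ∩ G.neighborSet y) {x} := by
      rw [Set.disjoint_right]
      rintro v rfl ⟨hv, _⟩
      exact G.loopless.irrefl _ hv
    have d2 : Disjoint ((G.neighborSet x ∩ G.neighborSet y) ∪ {x}) R := by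
      rw [Set.disjoint_right]
      rintro v ⟨_, hv2⟩ (⟨hv3, _⟩ | rfl)
      · exact hv2 (Or.inl hv3)
      · exact hv2 (Or.inr rfl)
    conv_lhs => rw [h1]
    rw [Set.ncard_union_eq d2, Set.ncard_union_eq d1, Set.ncard_singleton]
  -- Step 3: injections into the contracted edge set
  set A : Set (Sym2 {v : V // v ≠ y}) := Sym2.map g '' Eold with hA
  set B : Set (Sym2 {v : V // v ≠ y}) := (fun b => s(x', g b)) '' R with hB
  have hRprop : ∀ b ∈ R, G.Adj y b ∧ ¬G.Adj x b ∧ b ≠ x ∧ b ≠ y := by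
    rintro b ⟨hb1, hb2⟩
    refine ⟨hb1, fun h => hb2 (Or.inl h), fun h => hb2 (Or.inr h), (G.ne_of_adj hb1).symm⟩
  have hAsub : A ⊆ (contractG G x y).edgeSet := by
    rintro e ⟨e', he', rfl⟩
    induction e' using Sym2.ind with
    | _ a b =>
      obtain ⟨hab, hye⟩ := he'
      rw [mem_edgeSet] at hab
      simp only [Sym2.mem_iff] at hye
      push_neg at hye
      have ha : a ≠ y := fun h => hye.1 h.symm
      have hb : b ≠ y := fun h => hye.2 h.symm
      rw [Sym2.map_pair_eq, hg_ne a ha, hg_ne b hb, mem_edgeSet]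
      exact ⟨by simp [Subtype.ext_iff]; exact hab.ne, Or.inl hab⟩
  have hBsub : B ⊆ (contractG G x y).edgeSet := by
    rintro e ⟨b, hb, rfl⟩
    obtain ⟨hb1, hb2, hb3, hb4⟩ := hRprop b hb
    show s(x', g b) ∈ (contractG G x y).edgeSet
    rw [hg_ne b hb4, mem_edgeSet]
    refine ⟨by simp [Subtype.ext_iff, hx'def]; exact fun h => hb3 h.symm, Or.inr (Or.inl ⟨rfl, ?_⟩)⟩
    exact hb1
  have hAinj : Set.InjOn (Sym2.map g) Eold := by
    rintro e1 he1 e2 he2 heq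
    induction e1 using Sym2.ind with
    | _ a b =>
    induction e2 using Sym2.ind with
    | _ c d =>
      obtain ⟨-, hye1⟩ := he1
      obtain ⟨-, hye2⟩ := he2
      simp only [Sym2.mem_iff] at hye1 hye2
      push_neg at hye1 hye2
      have ha : a ≠ y := fun h => hye1.1 h.symm
      have hb : b ≠ y := fun h => hye1.2 h.symm
      have hc : c ≠ y := fun h => hye2.1 h.symm
      have hd : d ≠ y := fun h => hye2.2 h.symm
      rw [Sym2.map_pair_eq, Sym2.map_pair_eq, hg_ne a ha, hg_ne b hb, hg_ne c hc, hg_ne d hd,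
        Sym2.eq_iff] at heq
      rw [Sym2.eq_iff]
      rcases heq with ⟨h1, h2⟩ | ⟨h1, h2⟩
      · exact Or.inl ⟨congrArg Subtype.val h1, congrArg Subtype.val h2⟩
      · exact Or.inr ⟨congrArg Subtype.val h1, congrArg Subtype.val h2⟩
  have hBinj : Set.InjOn (fun b => s(x', g b)) R := by
    rintro b1 hb1 b2 hb2 heq
    obtain ⟨-, -, h13, h14⟩ := hRprop b1 hb1
    obtain ⟨-, -, h23, h24⟩ := hRprop b2 hb2
    simp only [hg_ne b1 h14, hg_ne b2 h24, Sym2.eq_iff] at heq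
    rcases heq with ⟨-, h2⟩ | ⟨h1, h2⟩
    · exact congrArg Subtype.val h2
    · exfalso
      apply h13
      have := congrArg Subtype.val h2
      simpa [hx'def] using this
  have hABdisj : Disjoint A B := by
    rw [Set.disjoint_left]
    rintro e ⟨e', he', rfl⟩ ⟨b, hb, hbe⟩
    obtain ⟨hb1, hb2, hb3, hb4⟩ := hRprop b hb
    induction e' using Sym2.ind with
    | _ a c =>
      obtain ⟨hac, hye⟩ := he'
      rw [mem_edgeSet] at hac
      simp only [Sym2.mem_iff] at hye
      push_neg at hye
      have ha : a ≠ y := fun h => hye.1 h.symm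
      have hc : c ≠ y := fun h => hye.2 h.symm
      simp only [Sym2.map_pair_eq, hg_ne a ha, hg_ne c hc, hg_ne b hb4, Sym2.eq_iff] at hbe
      rcases hbe with ⟨h1, h2⟩ | ⟨h1, h2⟩
      · have hax : x = a := by simpa [hx'def, Subtype.ext_iff] using congrArg Subtype.val h1
        have hbc : b = c := by simpa using congrArg Subtype.val h2
        apply hb2
        rw [hax, hbc]
        exact hac
      · have hxc : x = c := by simpa [hx'def, Subtype.ext_iff] using congrArg Subtype.val h1
        have hba : b = a := by simpa using congrArg Subtype.val h2
        apply hb2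
        rw [hxc, hba]
        exact hac.symm
  -- Step 4: conclude
  have hcard : Eold.ncard + R.ncard ≤ (contractG G x y).edgeSet.ncard := by
    have : (A ∪ B).ncard ≤ (contractG G x y).edgeSet.ncard :=
      Set.ncard_le_ncard (Set.union_subset hAsub hBsub) (Set.toFinite _)
    rwa [Set.ncard_union_eq hABdisj (Set.toFinite _) (Set.toFinite _),
      Set.ncard_image_of_injOn hAinj, Set.ncard_image_of_injOn hBinj] at this
  omega

/-- Handshake-type bound: ncard of edges vs min "degree" in terms of ncard. -/
lemma ncard_edgeSet_eq (G : SimpleGraph V) [Fintype V] [DecidableEq V] [DecidableRel G.Adj] :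
    G.edgeSet.ncard = G.edgeFinset.card := by
  rw [edgeFinset_card, ← Nat.card_coe_set_eq, Nat.card_eq_fintype_card]

lemma degree_ncard (G : SimpleGraph V) [Fintype V] [DecidableEq V] [DecidableRel G.Adj] (v : V) :
    (G.neighborSet v).ncard = G.degree v := by
  rw [← Nat.card_coe_set_eq, Nat.card_eq_fintype_card, card_neighborSet_eq_degree]

lemma min_degree_bound (G : SimpleGraph V) [Fintype V] (c : ℕ)
    (h : ∀ v : V, c ≤ (G.neighborSet v).ncard) :
    c * Fintype.card V ≤ 2 * G.edgeSet.ncard := by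
  classical
  rw [ncard_edgeSet_eq, ← G.sum_degrees_eq_twice_card_edges]
  calc c * Fintype.card V = ∑ _v : V, c := by
        rw [Finset.sum_const, Finset.card_univ, smul_eq_mul, mul_comm]
      _ ≤ ∑ v : V, G.degree v := by
        apply Finset.sum_le_sum
        intro v _
        rw [← degree_ncard]
        exact h v

lemma exists_big_degree (G : SimpleGraph V) [Fintype V] [Nonempty V] (t : ℕ)
    (h : t * Fintype.card V ≤ 2 * G.edgeSet.ncard) :
    ∃ x : V, t ≤ (G.neighborSet x).ncard := by
  classical
  by_contra hcon
  push_neg at hcon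
  have hall : ∀ x : V, G.degree x ≤ t - 1 := by
    intro x
    have := hcon x
    rw [degree_ncard] at this
    omega
  have hsum : 2 * G.edgeFinset.card ≤ (t - 1) * Fintype.card V := by
    rw [← G.sum_degrees_eq_twice_card_edges]
    calc ∑ v : V, G.degree v ≤ ∑ _v : V, (t - 1) := Finset.sum_le_sum fun v _ => hall v
      _ = (t - 1) * Fintype.card V := by
        rw [Finset.sum_const, Finset.card_univ, smul_eq_mul, mul_comm]
  rw [ncard_edgeSet_eq] at h
  have hn : 1 ≤ Fintype.card V := Fintype.card_pos
  have ht : 1 ≤ t := by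
    by_contra ht0
    have : t = 0 := by omega
    subst this
    exact absurd (hcon (Classical.arbitrary V)) (by omega)
  have hle : t * Fintype.card V ≤ (t - 1) * Fintype.card V := h.trans hsum
  have := Nat.le_of_mul_le_mul_right hle (by omega : 0 < Fintype.card V)
  omega

lemma induce_nbhd (G : SimpleGraph V) [Fintype V] (A : Set V) (b : ↥A) :
    (A ∩ G.neighborSet b.1).ncard ≤ ((G.induce A).neighborSet b).ncard := by
  rw [← Nat.card_coe_set_eq, ← Nat.card_coe_set_eq]
  have : Finite ↥((G.induce A).neighborSet b) := Subtype.finite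
  refine Nat.card_le_card_of_injective
    (fun v => ⟨⟨v.1, v.2.1⟩, ?_⟩) ?_
  · have hv := v.2.2
    rw [mem_neighborSet] at hv ⊢
    exact hv
  · intro v w hvw
    apply Subtype.ext
    have := congrArg (fun z => z.1.1) hvw
    exact this


end Helpers

lemma key (t : ℕ) (ht : 1 ≤ t) (s : ℕ) :
    ∀ (n : ℕ), 1 ≤ s → ∀ (X : Type u) [Fintype X] [Nonempty X] (G : SimpleGraph X),
      Fintype.card X = n → 2 ^ (s + 1) * t * n ≤ G.edgeSet.ncard →
      HasMinor G (completeBipartiteGraph (Fin s) (Fin t)) := by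
  induction s with
  | zero => intro n h; exact absurd h (by norm_num)
  | succ s ih =>
    intro n
    induction n using Nat.strong_induction_on with
    | _ n ihn =>
      intro _hs X _iX _nX G hcard hE
      classical
      have hn1 : 1 ≤ n := hcard ▸ Fintype.card_pos
      rcases Nat.eq_zero_or_pos s with rfl | hs1
      -- ============ BASE CASE : K_{1,t} ============
      · have hdeg : t * Fintype.card X ≤ 2 * G.edgeSet.ncard := by
          rw [hcard]
          have h1 : t * n ≤ 2 ^ (0 + 1 + 1) * t * n := by
            have : t ≤ 2 ^ (0 + 1 + 1) * t := Nat.le_mul_of_pos_left t (by norm_num)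
            exact Nat.mul_le_mul_right n this
          exact h1.trans (hE.trans (Nat.le_mul_of_pos_left _ (by norm_num)))
        obtain ⟨x, hx⟩ := exists_big_degree G t hdeg
        set P : Finset X := (G.neighborSet x).toFinset with hP
        have hPcard : t ≤ P.card := by
          rwa [hP, ← Set.ncard_eq_toFinset_card']
        obtain ⟨Q, hQP, hQcard⟩ := Finset.exists_subset_card_eq hPcard
        set eq1 : ↥Q ≃ Fin t := Q.equivFin.trans (finCongr hQcard) with heq1
        set f : Fin t → X := fun i => (eq1.symm i).1 with hf
        have hfinj : Function.Injective f := fun i j hij =>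
          eq1.symm.injective (Subtype.ext hij)
        have hfmem : ∀ i, G.Adj x (f i) := by
          intro i
          have : f i ∈ P := hQP (eq1.symm i).2
          rw [hP, Set.mem_toFinset, mem_neighborSet] at this
          exact this
        refine ⟨Sum.elim (fun _ => {x}) (fun i => {f i}), ?_, ?_, ?_, ?_⟩
        · rintro (i | j)
          · exact ⟨x, rfl⟩
          · exact ⟨f j, rfl⟩
        · rintro (i | j)
          · exact singleton_conn G x
          · exact singleton_conn G (f j)
        · rintro (i | j) (i' | j') hne
          · exact absurd (congrArg Sum.inl (Fin.ext (by have := i.isLt; have := i'.isLt; omega))) hne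
          · simp only [Sum.elim_inl, Sum.elim_inr]
            rw [Set.disjoint_singleton]
            exact (hfmem j').ne
          · simp only [Sum.elim_inl, Sum.elim_inr]
            rw [Set.disjoint_singleton]
            exact (hfmem j).ne'
          · simp only [Sum.elim_inr]
            rw [Set.disjoint_singleton]
            intro hcon
            exact hne (congrArg Sum.inr (hfinj hcon))
        · rintro (i | j) (i' | j') hadj
          · simp at hadj
          · exact ⟨x, rfl, f j', rfl, hfmem j'⟩
          · exact ⟨f j, rfl, x, rfl, (hfmem j).symm⟩
          · simp at hadj
      -- ============ INDUCTIVE STEP ============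
      · set c : ℕ := 2 ^ (s + 1 + 1) * t with hc
        have hc1 : 0 < c := by rw [hc]; positivity
        have hene : G.edgeSet.Nonempty := by
          apply Set.nonempty_of_ncard_ne_zero
          have hcn : 0 < c * n := Nat.mul_pos hc1 (by omega)
          omega
        obtain ⟨e0, he0⟩ := hene
        obtain ⟨x0, y0, hxy0⟩ : ∃ a b, G.Adj a b := by
          induction e0 using Sym2.ind with
          | _ a b => exact ⟨a, b, (mem_edgeSet G).mp he0⟩
        by_cases hcase : ∃ a b, G.Adj a b ∧ (G.neighborSet a ∩ G.neighborSet b).ncard + 1 ≤ c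
        -- ----- contraction case -----
        · obtain ⟨a, b, hab, hsmall⟩ := hcase
          haveI : Nonempty {v : X // v ≠ b} := ⟨⟨a, hab.ne⟩⟩
          have hcard' : Fintype.card {v : X // v ≠ b} = n - 1 := by
            rw [Fintype.card_subtype_compl, Fintype.card_subtype_eq, hcard]
          have hn2 : 2 ≤ n := by
            rw [← hcard]
            exact Fintype.one_lt_card_iff_nontrivial.mpr ⟨⟨a, b, hab.ne⟩⟩
          have hEc := contract_edges G hab
          have hE' : c * (n - 1) ≤ (contractG G a b).edgeSet.ncard := by
            have harith : c * (n - 1) + c = c * n := by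
              have hn' : n - 1 + 1 = n := by omega
              calc c * (n - 1) + c = c * ((n - 1) + 1) := by ring
                _ = c * n := by rw [hn']
            omega
          exact contract_minor G hab _
            (ihn (n - 1) (by omega) (by omega) {v : X // v ≠ b} (contractG G a b) hcard' hE')
        -- ----- neighborhood case -----
        · push_neg at hcase
          have hcommon : ∀ a b, G.Adj a b → c ≤ (G.neighborSet a ∩ G.neighborSet b).ncard := by
            intro a b hab
            have := hcase a b hab
            omega
          set A : Set X := G.neighborSet x0 with hA
          haveI : Nonempty ↥A := ⟨⟨y0, hxy0⟩⟩
          have hmindeg : ∀ v : ↥A, c ≤ ((G.induce A).neighborSet v).ncard := by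
            intro v
            refine le_trans ?_ (induce_nbhd G A v)
            exact hcommon x0 v.1 v.2
          have hbound := min_degree_bound (G.induce A) c hmindeg
          have hE2 : 2 ^ (s + 1) * t * Fintype.card ↥A ≤ (G.induce A).edgeSet.ncard := by
            have h2 : c * Fintype.card ↥A = 2 * (2 ^ (s + 1) * t * Fintype.card ↥A) := by
              rw [hc]; ring
            rw [h2] at hbound
            omega
          obtain ⟨φ, hsub, h1, h2, h3, h4⟩ :=
            minor_induce G A _ (ih (Fintype.card ↥A) hs1 ↥A (G.induce A) rfl hE2)
          have hxA : x0 ∉ A := fun h => G.loopless.irrefl x0 h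
          refine ⟨Sum.elim (fun i : Fin (s + 1) =>
              if h : i.1 < s then φ (Sum.inl ⟨i.1, h⟩) else {x0})
              (fun j => φ (Sum.inr j)), ?_, ?_, ?_, ?_⟩
          · rintro (i | j)
            · simp only [Sum.elim_inl]
              by_cases hi : i.1 < s
              · rw [dif_pos hi]; exact h1 _
              · rw [dif_neg hi]; exact ⟨x0, rfl⟩
            · exact h1 _
          · rintro (i | j)
            · simp only [Sum.elim_inl]
              by_cases hi : i.1 < s
              · rw [dif_pos hi]; exact h2 _
              · rw [dif_neg hi]; exact singleton_conn G x0
            · exact h2 _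
          · rintro (i | j) (i' | j') hne <;>
              simp only [Sum.elim_inl, Sum.elim_inr]
            · by_cases hi : i.1 < s <;> by_cases hi' : i'.1 < s
              · rw [dif_pos hi, dif_pos hi']
                refine h3 _ _ ?_
                intro hcon
                apply hne
                have h' : (⟨i.1, hi⟩ : Fin s) = ⟨i'.1, hi'⟩ := Sum.inl.inj hcon
                have hval : i.1 = i'.1 := by
                  have h'' := congrArg Fin.val h'
                  simpa using h''
                exact congrArg Sum.inl (Fin.ext hval)
              · rw [dif_pos hi, dif_neg hi']
                exact Set.disjoint_singleton_right.mpr (fun hx => hxA (hsub _ hx))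
              · rw [dif_neg hi, dif_pos hi']
                exact Set.disjoint_singleton_left.mpr (fun hx => hxA (hsub _ hx))
              · exfalso
                apply hne
                have : i = i' := Fin.ext (by have := i.isLt; have := i'.isLt; omega)
                rw [this]
            · by_cases hi : i.1 < s
              · rw [dif_pos hi]
                exact h3 _ _ (by simp)
              · rw [dif_neg hi]
                exact Set.disjoint_singleton_left.mpr (fun hx => hxA (hsub _ hx))
            · by_cases hi' : i'.1 < s
              · rw [dif_pos hi']
                exact h3 _ _ (by simp)
              · rw [dif_neg hi']
                exact Set.disjoint_singleton_right.mpr (fun hx => hxA (hsub _ hx))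
            · have hjj : j ≠ j' := fun h => hne (by rw [h])
              exact h3 _ _ (fun h => hjj (Sum.inr.inj h))
          · rintro (i | j) (i' | j') hadj
            · simp at hadj
            · simp only [Sum.elim_inl, Sum.elim_inr]
              by_cases hi : i.1 < s
              · rw [dif_pos hi]
                exact h4 (Sum.inl ⟨i.1, hi⟩) (Sum.inr j') (by simp)
              · rw [dif_neg hi]
                obtain ⟨v, hv⟩ := h1 (Sum.inr j')
                exact ⟨x0, rfl, v, hv, hsub _ hv⟩
            · simp only [Sum.elim_inl, Sum.elim_inr]
              by_cases hi' : i'.1 < s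
              · rw [dif_pos hi']
                obtain ⟨u, hu, v, hv, huv⟩ := h4 (Sum.inl ⟨i'.1, hi'⟩) (Sum.inr j) (by simp)
                exact ⟨v, hv, u, hu, huv.symm⟩
              · rw [dif_neg hi']
                obtain ⟨v, hv⟩ := h1 (Sum.inr j)
                exact ⟨v, hv, x0, rfl, (hsub _ hv : G.Adj x0 v).symm⟩
            · simp at hadj


/-- Every non-empty graph `G` with at least `2^(s+1) · t · |V(G)|` edges has a
`K_{s,t}`-minor. -/
theorem stmt_8 {V : Type*} [Fintype V] [Nonempty V] (G : SimpleGraph V)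
    (s t : ℕ) (hs : 1 ≤ s) (ht : 1 ≤ t)
    (h : 2 ^ (s + 1) * t * Fintype.card V ≤ G.edgeSet.ncard) :
    HasMinor G (completeBipartiteGraph (Fin s) (Fin t)) := by
  exact key t ht s (Fintype.card V) hs V G rfl h
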